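/- Let ξ be a Markov jump process on the finite sets P_k^s (for all k ≥ 1) whose transitions only merge blocks within a component and move blocks to empty components. Then condition (i): for all ζ, η ∈ P_k^s and ζ̃ ∈ P_{k+1}^s with ζ ≺ ζ̃, q(η|ζ) = Σ_{η̃: η ≺ η̃} q(η̃|ζ̃), is equivalent to (ii): for every ζ' ∈ P_{k+1}^s projecting to ζ, the restriction to P_k^s of the process started at ζ' has the same law as the process started at ζ. -/

import Mathlib

open Matrix

open scoped Nat

section Aux

variable {S' S : Type*} [Fintype S'] [Fintype S] [DecidableEq S'] [DecidableEq S]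

/-- right-multiplication by a fixed (possibly rectangular) matrix, as a CLM in the
Pi topology. -/
noncomputable def mulRightCLM (P : Matrix S' S ℝ) :
    Matrix S' S' ℝ →L[ℝ] Matrix S' S ℝ :=
  { toFun := fun A => A * P
    map_add' := fun x y => Matrix.add_mul x y P
    map_smul' := fun c x => Matrix.smul_mul c x P
    cont := continuous_id.matrix_mul continuous_const }

noncomputable def mulLeftCLM (P : Matrix S' S ℝ) :
    Matrix S S ℝ →L[ℝ] Matrix S' S ℝ :=
  { toFun := fun B => P * B
    map_add' := fun x y => Matrix.mul_add P x y
    map_smul' := fun c x => Matrix.mul_smul P c x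
    cont := continuous_const.matrix_mul continuous_id }

theorem exp_intertwine (A : Matrix S' S' ℝ) (B : Matrix S S ℝ) (P : Matrix S' S ℝ)
    (h : A * P = P * B) :
    NormedSpace.exp A * P = P * NormedSpace.exp B := by
  have hn : ∀ n : ℕ, A ^ n * P = P * B ^ n := by
    intro n
    induction n with
    | zero => simp
    | succ n ih => rw [pow_succ, pow_succ, Matrix.mul_assoc, h, ← Matrix.mul_assoc, ih,
        Matrix.mul_assoc]
  have hsumA : Summable (fun n : ℕ => ((n ! : ℝ)⁻¹) • A ^ n) := by
    letI : SeminormedRing (Matrix S' S' ℝ) := Matrix.linftyOpSemiNormedRing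
    letI : NormedRing (Matrix S' S' ℝ) := Matrix.linftyOpNormedRing
    letI : NormedAlgebra ℝ (Matrix S' S' ℝ) := Matrix.linftyOpNormedAlgebra
    exact NormedSpace.expSeries_summable' (𝕂 := ℝ) A
  have hsumB : Summable (fun n : ℕ => ((n ! : ℝ)⁻¹) • B ^ n) := by
    letI : SeminormedRing (Matrix S S ℝ) := Matrix.linftyOpSemiNormedRing
    letI : NormedRing (Matrix S S ℝ) := Matrix.linftyOpNormedRing
    letI : NormedAlgebra ℝ (Matrix S S ℝ) := Matrix.linftyOpNormedAlgebra
    exact NormedSpace.expSeries_summable' (𝕂 := ℝ) B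
  calc NormedSpace.exp A * P
      = mulRightCLM P (∑' n : ℕ, ((n ! : ℝ)⁻¹) • A ^ n) := by
        rw [NormedSpace.exp_eq_tsum (𝕂 := ℝ)]; rfl
    _ = ∑' n : ℕ, mulRightCLM P (((n ! : ℝ)⁻¹) • A ^ n) :=
        (mulRightCLM P).map_tsum hsumA
    _ = ∑' n : ℕ, mulLeftCLM P (((n ! : ℝ)⁻¹) • B ^ n) := by
        refine tsum_congr fun n => ?_
        rw [_root_.map_smul, _root_.map_smul]
        congr 1
        exact hn n
    _ = mulLeftCLM P (∑' n : ℕ, ((n ! : ℝ)⁻¹) • B ^ n) :=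
        ((mulLeftCLM P).map_tsum hsumB).symm
    _ = P * NormedSpace.exp B := by
        rw [NormedSpace.exp_eq_tsum (𝕂 := ℝ)]; rfl

theorem intertwine_of_exp (A : Matrix S' S' ℝ) (B : Matrix S S ℝ) (P : Matrix S' S ℝ)
    (h : ∀ t : ℝ, 0 ≤ t →
      NormedSpace.exp (t • A) * P = P * NormedSpace.exp (t • B)) :
    A * P = P * B := by
  letI : SeminormedRing (Matrix S' S' ℝ) := Matrix.linftyOpSemiNormedRing
  letI : NormedRing (Matrix S' S' ℝ) := Matrix.linftyOpNormedRing
  letI : NormedAlgebra ℝ (Matrix S' S' ℝ) := Matrix.linftyOpNormedAlgebra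
  letI : SeminormedRing (Matrix S S ℝ) := Matrix.linftyOpSemiNormedRing
  letI : NormedRing (Matrix S S ℝ) := Matrix.linftyOpNormedRing
  letI : NormedAlgebra ℝ (Matrix S S ℝ) := Matrix.linftyOpNormedAlgebra
  letI : NormedAddCommGroup (Matrix S' S ℝ) := Matrix.linftyOpNormedAddCommGroup
  letI : NormedSpace ℝ (Matrix S' S ℝ) := Matrix.linftyOpNormedSpace
  have hf : HasDerivAt (fun u : ℝ => NormedSpace.exp (u • A) * P) (A * P) 0 := by
    have h1 : HasDerivAt (fun u : ℝ => NormedSpace.exp (u • A))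
        (NormedSpace.exp ((0:ℝ) • A) * A) 0 := hasDerivAt_exp_smul_const A 0
    have h2 := (mulRightCLM P).hasFDerivAt.comp_hasDerivAt 0 h1
    simp only [zero_smul, NormedSpace.exp_zero, one_mul] at h2
    exact h2
  have hg : HasDerivAt (fun u : ℝ => P * NormedSpace.exp (u • B)) (P * B) 0 := by
    have h1 : HasDerivAt (fun u : ℝ => NormedSpace.exp (u • B))
        (B * NormedSpace.exp ((0:ℝ) • B)) 0 := hasDerivAt_exp_smul_const' B 0
    have h2 := (mulLeftCLM P).hasFDerivAt.comp_hasDerivAt 0 h1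
    simp only [zero_smul, NormedSpace.exp_zero, mul_one] at h2
    exact h2
  have hu : UniqueDiffWithinAt ℝ (Set.Ici (0:ℝ)) 0 :=
    uniqueDiffOn_Ici 0 0 Set.self_mem_Ici
  have hfW : HasDerivWithinAt (fun u : ℝ => NormedSpace.exp (u • A) * P) (A * P)
      (Set.Ici (0:ℝ)) 0 := hf.hasDerivWithinAt
  have hgW : HasDerivWithinAt (fun u : ℝ => NormedSpace.exp (u • A) * P) (P * B)
      (Set.Ici (0:ℝ)) 0 := by
    refine hg.hasDerivWithinAt.congr (fun y hy => h y hy) (h 0 le_rfl)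
  have e1 := hfW.derivWithin hu
  have e2 := hgW.derivWithin hu
  rw [← e1, ← e2]

end Aux

/-- **Lemma "consistence".** Let `X'` and `X` be Markov jump processes on
finite state spaces `S'` and `S` (here: the spaces `P_{k+1}^s` and `P_k^s` of structured
partitions) with Q-matrices `Q'` and `Q`, and let `π : S' → S` be the projection (deleting
the sample point `k+1`).  Then the rate-marginalization condition
(i): `q(η|ζ) = Σ_{η' : π η' = η} q'(ζ'|η')` for all `ζ'` and all `η ≠ π ζ'`,
is equivalent to the pathwise projective consistency
(ii): the law of the projected process started from any `ζ'` equals the law of the process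
started at `π ζ'`; for finite-state jump processes this is exactly the intertwining
`exp(tQ') · P_π = P_π · exp(tQ)` of the transition semigroups for all `t ≥ 0`, where
`P_π` is the 0-1 matrix of `π`. -/
theorem rate_marginalization_iff_projective_consistency
    {S' S : Type*} [Fintype S'] [Fintype S] [DecidableEq S'] [DecidableEq S]
    (π : S' → S) (hπ : Function.Surjective π)
    (Q' : Matrix S' S' ℝ) (Q : Matrix S S ℝ)
    (hQ'off : ∀ a b, a ≠ b → 0 ≤ Q' a b) (hQ'row : ∀ a, ∑ b, Q' a b = 0)
    (hQoff : ∀ a b, a ≠ b → 0 ≤ Q a b) (hQrow : ∀ a, ∑ b, Q a b = 0) :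
    (∀ (ζ' : S') (η : S), η ≠ π ζ' →
        Q (π ζ') η = ∑ η' : S', if π η' = η then Q' ζ' η' else 0)
      ↔ (∀ t : ℝ, 0 ≤ t →
          (NormedSpace.exp (t • Q')) * (Matrix.of fun a b => if π a = b then (1:ℝ) else 0)
            = (Matrix.of fun a b => if π a = b then (1:ℝ) else 0) * NormedSpace.exp (t • Q)) := by
  set P : Matrix S' S ℝ := Matrix.of fun a b => if π a = b then (1:ℝ) else 0 with hP
  have hQP : ∀ (ζ' : S') (η : S),
      (Q' * P) ζ' η = ∑ η' : S', if π η' = η then Q' ζ' η' else 0 := by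
    intro ζ' η
    simp only [Matrix.mul_apply, hP, Matrix.of_apply, mul_ite, mul_one, mul_zero]
  have hPQ : ∀ (ζ' : S') (η : S), (P * Q) ζ' η = Q (π ζ') η := by
    intro ζ' η
    simp only [Matrix.mul_apply, hP, Matrix.of_apply, ite_mul, one_mul, zero_mul]
    exact Finset.sum_ite_eq Finset.univ (π ζ') (fun s => Q s η) |>.trans
      (if_pos (Finset.mem_univ _))
  have key : (∀ (ζ' : S') (η : S), η ≠ π ζ' →
      Q (π ζ') η = ∑ η' : S', if π η' = η then Q' ζ' η' else 0) ↔ Q' * P = P * Q := by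
    constructor
    · intro hi
      ext ζ' η
      by_cases hη : η = π ζ'
      · subst hη
        have hrow1 : ∑ η : S, (Q' * P) ζ' η = 0 := by
          simp only [hQP]
          rw [Finset.sum_comm]
          calc ∑ η' : S', ∑ η : S, (if π η' = η then Q' ζ' η' else 0)
              = ∑ η' : S', Q' ζ' η' := by
                refine Finset.sum_congr rfl fun η' _ => ?_
                exact Finset.sum_ite_eq Finset.univ (π η') (fun _ => Q' ζ' η') |>.trans
                  (if_pos (Finset.mem_univ _))
            _ = 0 := hQ'row ζ'
        have hrow2 : ∑ η : S, (P * Q) ζ' η = 0 := by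
          simp only [hPQ]; exact hQrow (π ζ')
        have herase : ∑ η ∈ Finset.univ.erase (π ζ'), (Q' * P) ζ' η
            = ∑ η ∈ Finset.univ.erase (π ζ'), (P * Q) ζ' η := by
          refine Finset.sum_congr rfl fun η hη => ?_
          rw [hQP, hPQ]
          exact (hi ζ' η (Finset.ne_of_mem_erase hη)).symm
        have h1 := Finset.sum_erase_add Finset.univ (fun η => (Q' * P) ζ' η)
          (Finset.mem_univ (π ζ'))
        have h2 := Finset.sum_erase_add Finset.univ (fun η => (P * Q) ζ' η)
          (Finset.mem_univ (π ζ'))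
        rw [hrow1] at h1
        rw [hrow2] at h2
        have := herase
        linarith [h1, h2, herase]
      · rw [hQP, hPQ]
        exact (hi ζ' η hη).symm
    · intro hm ζ' η hη
      rw [← hPQ ζ' η, ← hm, hQP]
  rw [key]
  constructor
  · intro hm t ht
    refine exp_intertwine (t • Q') (t • Q) P ?_
    rw [Matrix.smul_mul, Matrix.mul_smul, hm]
  · intro hii
    exact intertwine_of_exp Q' Q P hii
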